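/- There exists a joint distribution over binary X, Y₁, Y₂ and outcomes y₁, y₂ for which surprise fails to chain: I(y₁,y₂; X) ≠ I(y₁; X) + I(y₂; X | y₁). Concretely, with p(y₁)=1/2, p(x,y₂|y₁=0)=1/4 for all (x,y₂), p(x|y₂=0,y₁=1)=1/2 for both x, p(x=0|y₂=1,y₁=1)=1, and outcomes y₁=1, y₂=1, one has E_{p(x|y₁,y₂)}[I(y₁;x)] = log(2·√3·5^{1/4}/5) ≠ log(6/5) = I(y₁;X). -/
import Mathlib


open Real Finset

/-- Surprise fails to chain over observed outcomes: there is a joint distribution over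
binary `X, Y₁, Y₂` and outcomes `y₁, y₂` with
`I(y₁,y₂; X) ≠ I(y₁; X) + I(y₂; X | y₁)`.  Concretely, one can take a distribution with
`p(y₁=0) = 1/2`, `p(x, y₂ | y₁=0) = 1/4`, `p(x | y₂=0, y₁=1) = 1/2`,
`p(x=0 | y₂=1, y₁=1) = 1`, and the outcomes `y₁ = 1`, `y₂ = 1`. -/
theorem surprise_does_not_chain :
    ∃ p : Bool × Bool × Bool → ℝ, ∃ y₁ y₂ : Bool,
      (∀ z, 0 ≤ p z) ∧ (∑ z, p z = 1) ∧ (0 < ∑ x, p (x, y₁, y₂)) ∧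
      y₁ = true ∧ y₂ = true ∧
      -- p(y₁ = 0) = 1/2
      (∑ x, ∑ y₂', p (x, false, y₂')) = 1 / 2 ∧
      -- p(x, y₂ | y₁ = 0) = 1/4 for all (x, y₂)
      (∀ x y₂', p (x, false, y₂') / (∑ x', ∑ y₂'', p (x', false, y₂'')) = 1 / 4) ∧
      -- p(x | y₂ = 0, y₁ = 1) = 1/2 for both x
      (∀ x, p (x, true, false) / (∑ x', p (x', true, false)) = 1 / 2) ∧
      -- p(x = 0 | y₂ = 1, y₁ = 1) = 1
      p (false, true, true) / (∑ x', p (x', true, true)) = 1 ∧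
      (let pX := fun x => ∑ y₁', ∑ y₂', p (x, y₁', y₂')
       let pY₁ := ∑ x, ∑ y₂', p (x, y₁, y₂')
       let pY₁Y₂ := ∑ x, p (x, y₁, y₂)
       let pXY₁ := fun x => ∑ y₂', p (x, y₁, y₂')
       let pXgY₁ := fun x => pXY₁ x / pY₁
       let pXgY₁Y₂ := fun x => p (x, y₁, y₂) / pY₁Y₂
       -- I(y₁, y₂; X)
       let I12 := ∑ x, pXgY₁Y₂ x * Real.log (p (x, y₁, y₂) / (pX x * pY₁Y₂))
       -- I(y₁; X)
       let I1 := ∑ x, pXgY₁ x * Real.log (pXY₁ x / (pX x * pY₁))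
       -- I(y₂; X | y₁)
       let I2g1 := ∑ x, pXgY₁Y₂ x *
         Real.log ((p (x, y₁, y₂) / pY₁) / (pXgY₁ x * (pY₁Y₂ / pY₁)))
       I12 ≠ I1 + I2g1) := by
  refine ⟨fun z => match z with
    | (_, false, _) => 1/8
    | (_, true, false) => 1/8
    | (false, true, true) => 1/4
    | (true, true, true) => 0, true, true, ?_, ?_, ?_, rfl, rfl, ?_, ?_, ?_, ?_, ?_⟩
  · rintro ⟨x, y1, y2⟩
    rcases x <;> rcases y1 <;> rcases y2 <;> simp
  · simp [Fintype.sum_prod_type, Fintype.sum_bool]; norm_num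
  · simp [Fintype.sum_bool]
  · simp [Fintype.sum_bool]; norm_num
  · intro x y₂'
    rcases x <;> rcases y₂' <;> simp [Fintype.sum_bool] <;> norm_num
  · intro x
    rcases x <;> simp [Fintype.sum_bool] <;> norm_num
  · simp [Fintype.sum_bool]
  · simp only [Fintype.sum_prod_type, Fintype.sum_bool]
    norm_num
    intro h
    have l8 : Real.log (8/5) = 3*Real.log 2 - Real.log 5 := by
      rw [Real.log_div (by norm_num) (by norm_num), show (8:ℝ) = 2^3 by norm_num,
        Real.log_pow]; push_cast; ring
    have l23 : Real.log (2/3) = Real.log 2 - Real.log 3 :=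
      Real.log_div (by norm_num) (by norm_num)
    have l65 : Real.log (6/5) = Real.log 2 + Real.log 3 - Real.log 5 := by
      rw [Real.log_div (by norm_num) (by norm_num), show (6:ℝ) = 2*3 by norm_num,
        Real.log_mul (by norm_num) (by norm_num)]
    have l43 : Real.log (4/3) = 2*Real.log 2 - Real.log 3 := by
      rw [Real.log_div (by norm_num) (by norm_num), show (4:ℝ) = 2^2 by norm_num,
        Real.log_pow]; push_cast; ring
    have h9 : Real.log 9 = 2*Real.log 3 := by
      rw [show (9:ℝ) = 3^2 by norm_num, Real.log_pow]; push_cast; ring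
    have hlt : Real.log 5 < Real.log 9 := Real.log_lt_log (by norm_num) (by norm_num)
    rw [l8, l23, l65, l43] at h
    linarith
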